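/- Bayes lower bound for arbitrary (non-separable) rules under i.i.d. parameters: let θ₁, …, θ_n be i.i.d. with distribution G supported in [-c, c], let Z₁, …, Z_n be i.i.d. standard normal independent of the θᵢ, and Yᵢ = θᵢ + σZᵢ. Then for every measurable Δ : ℝⁿ → ℝⁿ, E[ (1/n) ∑_{i=1}^n (Δᵢ(Y₁, …, Y_n) − θᵢ)² ] ≥ E[ (δ_G(Y₁) − θ₁)² ]; that is, the compound risk of any joint decision rule is at least the Bayes risk of the simple separable rule δ_G. -/

import Mathlib

open MeasureTheory Set ProbabilityTheory

/-- The standard normal density `φ(z) = (2π)^{-1/2} e^{-z²/2}`. -/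
noncomputable def stdNormalPDF (z : ℝ) : ℝ := (Real.sqrt (2 * Real.pi))⁻¹ * Real.exp (-z ^ 2 / 2)

/-- The posterior mean (Bayes rule) `δ_G(y)`. -/
noncomputable def postMean (σ : ℝ) (G : MeasureTheory.Measure ℝ) (y : ℝ) : ℝ :=
  (∫ t, t * stdNormalPDF ((y - t) / σ) ∂G) / ∫ t, stdNormalPDF ((y - t) / σ) ∂G

lemma stdNormalPDF_pos (z : ℝ) : 0 < stdNormalPDF z := by
  unfold stdNormalPDF
  positivity

lemma stdNormalPDF_le (z : ℝ) : stdNormalPDF z ≤ (Real.sqrt (2 * Real.pi))⁻¹ := by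
  unfold stdNormalPDF
  have h1 : Real.exp (-z ^ 2 / 2) ≤ 1 := by
    rw [Real.exp_le_one_iff]
    nlinarith [sq_nonneg z]
  have h2 : (0:ℝ) ≤ (Real.sqrt (2 * Real.pi))⁻¹ := by positivity
  nlinarith

lemma measurable_stdNormalPDF : Measurable stdNormalPDF := by
  unfold stdNormalPDF
  fun_prop

lemma gaussianPDF_eq_stdNormalPDF (z : ℝ) :
    gaussianPDF 0 1 z = ENNReal.ofReal (stdNormalPDF z) := by
  unfold gaussianPDF gaussianPDFReal stdNormalPDF
  norm_num

lemma measurable_postMean (σ : ℝ) (G : Measure ℝ) [SFinite G] :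
    Measurable (postMean σ G) := by
  have h1 : Measurable fun y => ∫ t, t * stdNormalPDF ((y - t) / σ) ∂G := by
    apply (StronglyMeasurable.integral_prod_right'
      (f := fun q : ℝ × ℝ => q.2 * stdNormalPDF ((q.1 - q.2) / σ)) ?_).measurable
    exact (measurable_snd.mul
      ((measurable_stdNormalPDF.comp ((measurable_fst.sub measurable_snd).div_const σ)))).stronglyMeasurable
  have h2 : Measurable fun y => ∫ t, stdNormalPDF ((y - t) / σ) ∂G := by
    apply (StronglyMeasurable.integral_prod_right'
      (f := fun q : ℝ × ℝ => stdNormalPDF ((q.1 - q.2) / σ)) ?_).measurable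
    exact ((measurable_stdNormalPDF.comp ((measurable_fst.sub measurable_snd).div_const σ))).stronglyMeasurable
  exact h1.div h2

lemma integrable_mul_ker {σ c y : ℝ} {G : Measure ℝ} [IsProbabilityMeasure G]
    (hG : ∀ᵐ t ∂G, t ∈ Icc (-c) c) {g : ℝ → ℝ} (hg : Measurable g) (C : ℝ)
    (hC : ∀ t ∈ Icc (-c) c, |g t| ≤ C) :
    Integrable (fun t => g t * stdNormalPDF ((y - t) / σ)) G := by
  refine Integrable.mono' (integrable_const (C * (Real.sqrt (2 * Real.pi))⁻¹))
    ((hg.mul (measurable_stdNormalPDF.comp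
      ((measurable_const.sub measurable_id).div_const σ))).aestronglyMeasurable) ?_
  filter_upwards [hG] with t ht
  have h1 : |g t| ≤ C := hC t ht
  have h2 := stdNormalPDF_le ((y - t) / σ)
  have h3 := (stdNormalPDF_pos ((y - t) / σ)).le
  have : ‖g t * stdNormalPDF ((y - t) / σ)‖ = |g t| * stdNormalPDF ((y - t) / σ) := by
    rw [norm_mul, Real.norm_eq_abs, Real.norm_eq_abs, abs_of_nonneg h3]
  rw [this]
  exact mul_le_mul h1 h2 h3 ((abs_nonneg _).trans h1)

lemma integrable_sq_ker {σ c y : ℝ} {G : Measure ℝ} [IsProbabilityMeasure G]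
    (hG : ∀ᵐ t ∂G, t ∈ Icc (-c) c) (b : ℝ) :
    Integrable (fun t => (b - t) ^ 2 * stdNormalPDF ((y - t) / σ)) G := by
  refine integrable_mul_ker hG (by fun_prop) ((|b| + c) ^ 2) (fun t ht => ?_)
  have h1 : |t| ≤ c := abs_le.2 ⟨ht.1, ht.2⟩
  have h2 : |b - t| ≤ |b| + c := (abs_sub b t).trans (by linarith)
  rw [abs_of_nonneg (sq_nonneg _)]
  calc (b - t) ^ 2 = |b - t| ^ 2 := (sq_abs _).symm
    _ ≤ (|b| + c) ^ 2 := by apply pow_le_pow_left₀ (abs_nonneg _) h2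

lemma post_var_le {σ c : ℝ} {G : Measure ℝ} [IsProbabilityMeasure G]
    (hG : ∀ᵐ t ∂G, t ∈ Icc (-c) c) (y a : ℝ) :
    ∫ t, (postMean σ G y - t) ^ 2 * stdNormalPDF ((y - t) / σ) ∂G
      ≤ ∫ t, (a - t) ^ 2 * stdNormalPDF ((y - t) / σ) ∂G := by
  set h : ℝ → ℝ := fun t => stdNormalPDF ((y - t) / σ) with hh
  have hI0 : Integrable h G := by
    have := integrable_mul_ker (σ := σ) (y := y) hG measurable_const (g := fun _ => (1:ℝ)) 1
      (fun t _ => by norm_num)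
    simpa using this
  have hI1 : Integrable (fun t => t * h t) G :=
    integrable_mul_ker hG measurable_id c (fun t ht => abs_le.2 ⟨ht.1, ht.2⟩)
  have hsq : ∀ b : ℝ, Integrable (fun t => (b - t) ^ 2 * h t) G := fun b =>
    integrable_sq_ker hG b
  have hI2 : Integrable (fun t => t ^ 2 * h t) G := by
    have := hsq 0
    simpa using this
  set I0 := ∫ t, h t ∂G with hI0d
  set I1 := ∫ t, t * h t ∂G with hI1d
  set I2 := ∫ t, t ^ 2 * h t ∂G with hI2d
  have hI0pos : 0 < I0 := by
    rw [hI0d, integral_pos_iff_support_of_nonneg (fun t => (stdNormalPDF_pos _).le) hI0]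
    have : Function.support h = univ := Set.eq_univ_of_forall fun t => (stdNormalPDF_pos _).ne'
    have this' : Function.support (fun t => stdNormalPDF ((y - t) / σ)) = univ := this
    simp [this, this']
  have expand : ∀ b : ℝ, ∫ t, (b - t) ^ 2 * h t ∂G = b ^ 2 * I0 - 2 * b * I1 + I2 := by
    intro b
    have heq : (fun t => (b - t) ^ 2 * h t)
        = fun t => (b ^ 2 * h t - 2 * b * (t * h t)) + t ^ 2 * h t := by
      funext t; ring
    have A : ∫ t, (b ^ 2 * h t - 2 * b * (t * h t)) + t ^ 2 * h t ∂G
        = (∫ t, b ^ 2 * h t - 2 * b * (t * h t) ∂G) + ∫ t, t ^ 2 * h t ∂G :=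
      integral_add ((hI0.const_mul _).sub (hI1.const_mul _)) hI2
    have B : ∫ t, b ^ 2 * h t - 2 * b * (t * h t) ∂G
        = (∫ t, b ^ 2 * h t ∂G) - ∫ t, 2 * b * (t * h t) ∂G :=
      integral_sub (hI0.const_mul _) (hI1.const_mul _)
    rw [heq, A, B, integral_const_mul, integral_const_mul]
  set m := postMean σ G y with hm
  have hmI : I1 = m * I0 := by
    have : m = I1 / I0 := rfl
    rw [this]; field_simp
  rw [expand a, expand m, hmI]
  nlinarith [sq_nonneg (a - m), hI0pos]

lemma lintegral_comp_affine {σ : ℝ} (hσ : 0 < σ) (t : ℝ) {h : ℝ → ENNReal} (hh : Measurable h) :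
    ∫⁻ z, h z = (ENNReal.ofReal σ)⁻¹ * ∫⁻ y, h ((y - t) / σ) := by
  have e_meas : Measurable fun y : ℝ => (y - t) / σ :=
    (measurable_id.sub_const t).div_const σ
  have hmap : Measure.map (fun y : ℝ => (y - t) / σ) volume = ENNReal.ofReal σ • volume := by
    have hcomp : (fun y : ℝ => (y - t) / σ) = (fun x : ℝ => σ⁻¹ * x) ∘ fun y : ℝ => y + -t := by
      funext y; rw [Function.comp_apply, div_eq_inv_mul]; ring_nf
    rw [hcomp, ← Measure.map_map (measurable_const_mul σ⁻¹) (measurable_add_const (-t)),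
      map_add_right_eq_self volume (-t), Real.map_volume_mul_left (inv_ne_zero hσ.ne'),
      inv_inv, abs_of_pos hσ]
  have key : ENNReal.ofReal σ * ∫⁻ z, h z = ∫⁻ y, h ((y - t) / σ) := by
    rw [← smul_eq_mul, ← lintegral_smul_measure, ← hmap, lintegral_map hh e_meas]
  rw [← key, ← mul_assoc, ENNReal.inv_mul_cancel (ENNReal.ofReal_pos.2 hσ).ne'
    ENNReal.ofReal_ne_top, one_mul]

lemma J_calc {σ : ℝ} (hσ : 0 < σ) (G : Measure ℝ) [IsProbabilityMeasure G]
    {f : ℝ → ℝ} (hf : Measurable f) :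
    ∫⁻ p : ℝ × ℝ, ENNReal.ofReal ((f (p.1 + σ * p.2) - p.1) ^ 2) ∂(G.prod (gaussianReal 0 1))
      = (ENNReal.ofReal σ)⁻¹
        * ∫⁻ y, ∫⁻ t, ENNReal.ofReal ((f y - t) ^ 2 * stdNormalPDF ((y - t) / σ)) ∂G := by
  have hm1 : Measurable fun p : ℝ × ℝ => ENNReal.ofReal ((f (p.1 + σ * p.2) - p.1) ^ 2) := by
    apply ENNReal.measurable_ofReal.comp
    exact ((hf.comp (measurable_fst.add (measurable_snd.const_mul σ))).sub measurable_fst).pow_const 2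
  rw [lintegral_prod _ hm1.aemeasurable]
  have inner : ∀ t : ℝ, ∫⁻ z, ENNReal.ofReal ((f (t + σ * z) - t) ^ 2) ∂(gaussianReal 0 1)
      = (ENNReal.ofReal σ)⁻¹
        * ∫⁻ y, ENNReal.ofReal ((f y - t) ^ 2 * stdNormalPDF ((y - t) / σ)) := by
    intro t
    have hginner : Measurable fun z : ℝ => ENNReal.ofReal ((f (t + σ * z) - t) ^ 2) := by
      apply ENNReal.measurable_ofReal.comp
      exact ((hf.comp ((measurable_id.const_mul σ).const_add t)).sub measurable_const).pow_const 2
    rw [gaussianReal_of_var_ne_zero 0 one_ne_zero,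
      lintegral_withDensity_eq_lintegral_mul _ (measurable_gaussianPDF 0 1) hginner]
    simp only [Pi.mul_apply]
    rw [lintegral_comp_affine hσ t
      (h := fun z => gaussianPDF 0 1 z * ENNReal.ofReal ((f (t + σ * z) - t) ^ 2))
      ((measurable_gaussianPDF 0 1).mul hginner)]
    congr 1
    apply lintegral_congr
    intro y
    have hy : t + σ * ((y - t) / σ) = y := by field_simp; ring
    rw [hy, gaussianPDF_eq_stdNormalPDF, ← ENNReal.ofReal_mul (stdNormalPDF_pos _).le, mul_comm]
  simp_rw [inner]
  rw [lintegral_const_mul' _ _ (ENNReal.inv_ne_top.2 (ENNReal.ofReal_pos.2 hσ).ne')]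
  congr 1
  apply lintegral_lintegral_swap
  apply (ENNReal.measurable_ofReal.comp ?_).aemeasurable
  exact ((hf.comp measurable_snd).sub measurable_fst).pow_const 2 |>.mul
    (measurable_stdNormalPDF.comp ((measurable_snd.sub measurable_fst).div_const σ))

lemma J_ge {σ c : ℝ} (hσ : 0 < σ) {G : Measure ℝ} [IsProbabilityMeasure G]
    (hG : ∀ᵐ t ∂G, t ∈ Icc (-c) c) {f : ℝ → ℝ} (hf : Measurable f) :
    ∫⁻ p : ℝ × ℝ, ENNReal.ofReal ((postMean σ G (p.1 + σ * p.2) - p.1) ^ 2)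
        ∂(G.prod (gaussianReal 0 1))
      ≤ ∫⁻ p : ℝ × ℝ, ENNReal.ofReal ((f (p.1 + σ * p.2) - p.1) ^ 2)
        ∂(G.prod (gaussianReal 0 1)) := by
  rw [J_calc hσ G hf, J_calc hσ G (measurable_postMean σ G)]
  apply mul_le_mul_right
  apply lintegral_mono
  intro y
  show ∫⁻ t, ENNReal.ofReal ((postMean σ G y - t) ^ 2 * stdNormalPDF ((y - t) / σ)) ∂G
      ≤ ∫⁻ t, ENNReal.ofReal ((f y - t) ^ 2 * stdNormalPDF ((y - t) / σ)) ∂G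
  have key : ∀ a : ℝ, ∫⁻ t, ENNReal.ofReal ((a - t) ^ 2 * stdNormalPDF ((y - t) / σ)) ∂G
      = ENNReal.ofReal (∫ t, (a - t) ^ 2 * stdNormalPDF ((y - t) / σ) ∂G) := by
    intro a
    rw [← ofReal_integral_eq_lintegral_ofReal (integrable_sq_ker hG a)
      (Filter.Eventually.of_forall fun t =>
        mul_nonneg (sq_nonneg _) (stdNormalPDF_pos _).le)]
  rw [key, key]
  exact ENNReal.ofReal_le_ofReal (post_var_le hG y (f y))

lemma insertNth_comp_map {m : ℕ} {α β : Type*} (i : Fin (m + 1)) (g : α → β) (x : α)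
    (w : Fin m → α) :
    (fun j => g (Fin.insertNth (α := fun _ => α) i x w j))
      = Fin.insertNth (α := fun _ => β) i (g x) fun j => g (w j) := by
  funext j
  refine Fin.succAboveCases (α := fun j =>
    g (Fin.insertNth (α := fun _ => α) i x w j)
      = Fin.insertNth (α := fun _ => β) i (g x) (fun j => g (w j)) j) i ?_ (fun k => ?_) j <;> simp

lemma measurable_insertNth_left {m : ℕ} (i : Fin (m + 1)) (w : Fin m → ℝ) :
    Measurable fun y : ℝ => Fin.insertNth (α := fun _ => ℝ) i y w := by
  apply measurable_pi_lambda
  intro j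
  refine Fin.succAboveCases
    (α := fun j => Measurable fun y : ℝ => Fin.insertNth (α := fun _ => ℝ) i y w j)
    i ?_ (fun k => ?_) j
  · simpa using (measurable_id' : Measurable fun y : ℝ => y)
  · simpa using measurable_const

/-- **Bayes lower bound for arbitrary (non-separable) rules under i.i.d. parameters**:
with `θ₁, …, θₙ` i.i.d. `G`, `Z₁, …, Zₙ` i.i.d. standard normal independent of the `θᵢ`,
and `Yᵢ = θᵢ + σZᵢ`, every measurable joint rule `Δ : ℝⁿ → ℝⁿ` satisfies
`E[(1/n) ∑ (Δᵢ(Y) − θᵢ)²] ≥ E[(δ_G(Y₁) − θ₁)²]`. -/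
theorem bayes_lower_bound_joint_rules (σ c : ℝ) (hσ : 0 < σ) (hc : 0 < c)
    (n : ℕ) (hn : 0 < n)
    (G : Measure ℝ) [IsProbabilityMeasure G] (hG : ∀ᵐ t ∂G, t ∈ Icc (-c) c)
    {Ω : Type*} [MeasurableSpace Ω] (P : Measure Ω) [IsProbabilityMeasure P]
    (θ Z : Fin n → Ω → ℝ)
    (hmeas : ∀ i, Measurable fun ω => (θ i ω, Z i ω))
    (hindep : iIndepFun (fun i ω => (θ i ω, Z i ω)) P)
    (hlaw : ∀ i, P.map (fun ω => (θ i ω, Z i ω)) = G.prod (gaussianReal 0 1))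
    (Y : Fin n → Ω → ℝ) (hY : ∀ i ω, Y i ω = θ i ω + σ * Z i ω)
    (Δ : (Fin n → ℝ) → Fin n → ℝ) (hΔ : Measurable Δ) :
    ∫⁻ ω, ENNReal.ofReal ((1 / n : ℝ) * ∑ i, (Δ (fun j => Y j ω) i - θ i ω) ^ 2) ∂P
      ≥ ∫⁻ ω, ENNReal.ofReal ((postMean σ G (Y ⟨0, hn⟩ ω) - θ ⟨0, hn⟩ ω) ^ 2) ∂P := by
  obtain ⟨m, rfl⟩ : ∃ m, n = m + 1 := ⟨n - 1, (Nat.succ_pred_eq_of_pos hn).symm⟩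
  haveI : IsProbabilityMeasure (G.prod (gaussianReal 0 1)) := by infer_instance
  set ν : Measure (ℝ × ℝ) := G.prod (gaussianReal 0 1) with hνd
  set X : Fin (m + 1) → Ω → ℝ × ℝ := fun i ω => (θ i ω, Z i ω) with hXd
  have hXm : ∀ i, Measurable (X i) := hmeas
  have hlaw' : ∀ i, P.map (X i) = ν := fun i => hlaw i
  have hvecm : Measurable fun ω => fun i => X i ω := measurable_pi_lambda _ hXm
  -- joint law is the product measure
  have hjoint : Measure.pi (fun _ : Fin (m + 1) => ν) = P.map (fun ω i => X i ω) := by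
    apply Measure.pi_eq
    intro s hs
    rw [Measure.map_apply hvecm (MeasurableSet.univ_pi hs)]
    have hpre : (fun ω i => X i ω) ⁻¹' (Set.pi univ s) = ⋂ i ∈ Finset.univ, X i ⁻¹' s i := by
      ext ω; simp [Set.mem_pi]
    rw [hpre, hindep.measure_inter_preimage_eq_mul Finset.univ (fun i _ => hs i)]
    exact Finset.prod_congr rfl fun i _ => by
      rw [← Measure.map_apply (hXm i) (hs i), hlaw' i]
  -- the Bayes risk
  set g : ℝ × ℝ → ENNReal :=
    fun p => ENNReal.ofReal ((postMean σ G (p.1 + σ * p.2) - p.1) ^ 2) with hgd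
  have hgm : Measurable g :=
    ENNReal.measurable_ofReal.comp ((((measurable_postMean σ G).comp
      (measurable_fst.add (measurable_snd.const_mul σ))).sub measurable_fst).pow_const 2)
  set R0 := ∫⁻ p : ℝ × ℝ, g p ∂ν with hR0d
  -- the right-hand side equals the Bayes risk
  have hRHS : ∫⁻ ω, ENNReal.ofReal ((postMean σ G (Y ⟨0, hn⟩ ω) - θ ⟨0, hn⟩ ω) ^ 2) ∂P = R0 := by
    have h1 : ∀ ω, ENNReal.ofReal ((postMean σ G (Y ⟨0, hn⟩ ω) - θ ⟨0, hn⟩ ω) ^ 2)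
        = g (X ⟨0, hn⟩ ω) := by
      intro ω
      rw [hgd]
      simp only [hXd]
      rw [hY]
    simp_rw [h1]
    rw [← lintegral_map hgm (hXm ⟨0, hn⟩), hlaw' ⟨0, hn⟩]
  rw [hRHS]
  -- measurability of the loss terms
  have hYm : ∀ i, Measurable (Y i) := by
    intro i
    have : Y i = fun ω => (X i ω).1 + σ * (X i ω).2 := by
      funext ω; rw [hY]
    rw [this]
    exact (measurable_fst.comp (hXm i)).add ((measurable_snd.comp (hXm i)).const_mul σ)
  have hterm : ∀ i : Fin (m + 1),
      Measurable fun ω => (Δ (fun j => Y j ω) i - θ i ω) ^ 2 := fun i =>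
    (((measurable_pi_apply i).comp (hΔ.comp (measurable_pi_lambda _ hYm))).sub
      (measurable_fst.comp (hXm i))).pow_const 2
  -- split the average
  have hsplit : ∀ ω, ENNReal.ofReal ((1 / ((m + 1 : ℕ) : ℝ))
        * ∑ i, (Δ (fun j => Y j ω) i - θ i ω) ^ 2)
      = ENNReal.ofReal (1 / ((m + 1 : ℕ) : ℝ))
        * ∑ i, ENNReal.ofReal ((Δ (fun j => Y j ω) i - θ i ω) ^ 2) := by
    intro ω
    rw [ENNReal.ofReal_mul (by positivity), ENNReal.ofReal_sum_of_nonneg fun i _ => sq_nonneg _]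
  simp_rw [hsplit]
  rw [lintegral_const_mul' _ _ ENNReal.ofReal_ne_top,
    lintegral_finset_sum _ fun i _ => (hterm i).ennreal_ofReal]
  -- each coordinate's risk dominates the Bayes risk
  have hTi : ∀ i : Fin (m + 1),
      R0 ≤ ∫⁻ ω, ENNReal.ofReal ((Δ (fun j => Y j ω) i - θ i ω) ^ 2) ∂P := by
    intro i
    set F : (Fin (m + 1) → ℝ × ℝ) → ENNReal :=
      fun v => ENNReal.ofReal ((Δ (fun j => (v j).1 + σ * (v j).2) i - (v i).1) ^ 2) with hFd
    have hFm : Measurable F := by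
      apply ENNReal.measurable_ofReal.comp
      apply Measurable.pow_const _ 2
      apply Measurable.sub
      · exact (measurable_pi_apply i).comp (hΔ.comp (measurable_pi_lambda _ fun j =>
          (measurable_fst.comp (measurable_pi_apply j)).add
            ((measurable_snd.comp (measurable_pi_apply j)).const_mul σ)))
      · exact measurable_fst.comp (measurable_pi_apply i)
    have htrans : ∫⁻ ω, ENNReal.ofReal ((Δ (fun j => Y j ω) i - θ i ω) ^ 2) ∂P
        = ∫⁻ v, F v ∂(Measure.pi fun _ : Fin (m + 1) => ν) := by
      rw [hjoint, lintegral_map hFm hvecm]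
      apply lintegral_congr
      intro ω
      have hv : (fun j => (X j ω).1 + σ * (X j ω).2) = fun j => Y j ω := by
        funext j; rw [hY]
      rw [hFd]
      simp only [hv]
      rfl
    rw [htrans]
    have hmp := measurePreserving_piFinSuccAbove (fun _ : Fin (m + 1) => ν) i
    rw [← (hmp.symm _).lintegral_comp hFm]
    have hsymm : ∀ q : (ℝ × ℝ) × (Fin m → ℝ × ℝ),
        (MeasurableEquiv.piFinSuccAbove (fun _ => ℝ × ℝ) i).symm q = i.insertNth q.1 q.2 := by
      intro q
      simp [MeasurableEquiv.piFinSuccAbove, Fin.insertNthEquiv]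
    rw [lintegral_prod_symm
      (fun q => F ((MeasurableEquiv.piFinSuccAbove (fun _ => ℝ × ℝ) i).symm q))
      (Measurable.aemeasurable (by exact hFm.comp (MeasurableEquiv.measurable _)))]
    calc R0 = ∫⁻ _ : Fin m → ℝ × ℝ, R0 ∂(Measure.pi fun _ : Fin m => ν) := by
          rw [lintegral_const, measure_univ, mul_one]
      _ ≤ _ := by
          apply lintegral_mono
          intro w
          rw [hR0d]
          have hfw : Measurable fun y : ℝ =>
              Δ (i.insertNth y fun j => (w j).1 + σ * (w j).2) i :=
            (measurable_pi_apply i).comp (hΔ.comp (measurable_insertNth_left i _))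
          refine le_trans (J_ge hσ hG hfw) (le_of_eq ?_)
          apply lintegral_congr
          intro x
          have h1 : (fun j => ((Fin.insertNth (α := fun _ => ℝ × ℝ) i x w) j).1
                + σ * ((Fin.insertNth (α := fun _ => ℝ × ℝ) i x w) j).2)
              = Fin.insertNth (α := fun _ => ℝ) i (x.1 + σ * x.2)
                  fun j => (w j).1 + σ * (w j).2 :=
            insertNth_comp_map i (fun p : ℝ × ℝ => p.1 + σ * p.2) x w
          rw [hsymm (x, w), hFd]
          simp only [h1, Fin.insertNth_apply_same]
  -- put everything together
  have hconst : ENNReal.ofReal (1 / ((m + 1 : ℕ) : ℝ)) = (((m + 1 : ℕ) : ENNReal))⁻¹ := by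
    rw [one_div, ENNReal.ofReal_inv_of_pos (by positivity), ENNReal.ofReal_natCast]
  calc ENNReal.ofReal (1 / ((m + 1 : ℕ) : ℝ))
        * ∑ i : Fin (m + 1), ∫⁻ ω, ENNReal.ofReal ((Δ (fun j => Y j ω) i - θ i ω) ^ 2) ∂P
      ≥ ENNReal.ofReal (1 / ((m + 1 : ℕ) : ℝ)) * ∑ _i : Fin (m + 1), R0 :=
        mul_le_mul_right (Finset.sum_le_sum fun i _ => hTi i) _
    _ = R0 := by
        rw [Finset.sum_const, Finset.card_univ, Fintype.card_fin, hconst, nsmul_eq_mul,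
          ← mul_assoc, ENNReal.inv_mul_cancel (by exact_mod_cast Nat.succ_ne_zero m)
            (ENNReal.natCast_ne_top _), one_mul]
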